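/- Let M be a p×p matrix with eigenvalues λ_1,…,λ_p (with multiplicity, over an algebraically closed field) and N a q×q matrix with eigenvalues μ_1,…,μ_q. Then the eigenvalues of M ⊗ I_q + I_p ⊗ N (Kronecker sum) are exactly λ_i + μ_j for i ∈ [p], j ∈ [q], with multiplicity; equivalently, det(M ⊗ I_q + I_p ⊗ N + t·I_{pq}) = ∏_{i,j} (t + λ_i + μ_j). -/

import Mathlib

open scoped Kronecker


open Matrix Polynomial in
private def eqF0 (p q : ℕ) : Fin q ≃ {x : Fin (p+1) × Fin q // x.1 = 0} where
  toFun := fun j2 => ⟨(0, j2), rfl⟩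
  invFun := fun x => x.1.2
  left_inv := fun j2 => rfl
  right_inv := fun x => by
    rcases x with ⟨⟨x1, x2⟩, hx⟩
    simp only at hx
    subst hx; rfl

private theorem eqF0_apply (p q : ℕ) (j2 : Fin q) :
    ((eqF0 p q j2 : {x : Fin (p+1) × Fin q // x.1 = 0}) : Fin (p+1) × Fin q) = (0, j2) := rfl

private def eqFS (p q : ℕ) : Fin p × Fin q ≃ {x : Fin (p+1) × Fin q // ¬ x.1 = 0} where
  toFun := fun x => ⟨(x.1.succ, x.2), Fin.succ_ne_zero x.1⟩
  invFun := fun x => (x.1.1.pred x.2, x.1.2)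
  left_inv := fun x => by simp
  right_inv := fun x => by
    rcases x with ⟨⟨x1, x2⟩, hx⟩
    simp [Fin.succ_pred]

private theorem eqFS_apply (p q : ℕ) (x : Fin p × Fin q) :
    ((eqFS p q x : {x : Fin (p+1) × Fin q // ¬ x.1 = 0}) : Fin (p+1) × Fin q)
      = (x.1.succ, x.2) := rfl

private def eqS (p : ℕ) : Fin p ≃ {i : Fin (p+1) // ¬ i = 0} where
  toFun := fun i => ⟨i.succ, Fin.succ_ne_zero i⟩
  invFun := fun i => i.1.pred i.2
  left_inv := fun i => by simp
  right_inv := fun i => by rcases i with ⟨i, hi⟩; simp [Fin.succ_pred]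

private theorem eqS_apply (p : ℕ) (i : Fin p) :
    ((eqS p i : {i : Fin (p+1) // ¬ i = 0}) : Fin (p+1)) = i.succ := rfl

private theorem det_subsingleton_block {R : Type*} [CommRing R] {n : Type*} [DecidableEq n]
    [Fintype n] (M : Matrix n n R) (pr : n → Prop) [DecidablePred pr]
    [Subsingleton {a // pr a}] (k : {a // pr a}) :
    (M.toSquareBlockProp pr).det = M k k :=
  Matrix.det_eq_elem_of_subsingleton _ _

open Matrix Polynomial

/-- charpoly is invariant under conjugation. -/
private theorem my_charpoly_conj {K : Type*} [Field K] {n : ℕ}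
    (P M : Matrix (Fin n) (Fin n) K) [Invertible P] :
    (⅟P * M * P).charpoly = M.charpoly := by
  have hmap : ((C : K →+* K[X]).mapMatrix (⅟P)) * ((C : K →+* K[X]).mapMatrix P) = 1 := by
    rw [← _root_.map_mul, invOf_mul_self, _root_.map_one]
  have hcm : charmatrix (⅟P * M * P)
      = ((C : K →+* K[X]).mapMatrix (⅟P)) * charmatrix M * ((C : K →+* K[X]).mapMatrix P) := by
    rw [charmatrix, charmatrix, Matrix.mul_sub, Matrix.sub_mul]
    congr 1
    · have hsc : ((C : K →+* K[X]).mapMatrix (⅟P)) * (Matrix.scalar (Fin n) (X : K[X]))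
          = (Matrix.scalar (Fin n) (X : K[X])) * ((C : K →+* K[X]).mapMatrix (⅟P)) :=
        (Matrix.scalar_commute (X : K[X]) (fun r => Commute.all _ _) _).symm
      rw [hsc, Matrix.mul_assoc, hmap, Matrix.mul_one]
    · rw [← _root_.map_mul, ← _root_.map_mul]
  rw [Matrix.charpoly, hcm, det_mul, det_mul, mul_right_comm, ← det_mul, hmap, det_one, one_mul,
    Matrix.charpoly]

/-- charpoly splits off `(X - C c)` when the first column is `c • e₀`. -/
private theorem charpoly_succ {K : Type*} [Field K] {p : ℕ}
    (A : Matrix (Fin (p+1)) (Fin (p+1)) K) (c : K)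
    (col0 : ∀ i, A i 0 = if i = 0 then c else 0) :
    A.charpoly = (X - C c) * (A.submatrix Fin.succ Fin.succ).charpoly := by
  have hblock : ∀ i : Fin (p+1), ¬ i = 0 → ∀ j : Fin (p+1), j = 0 →
      charmatrix A i j = 0 := by
    intro i hi j hj
    subst hj
    rw [charmatrix_apply_ne _ _ _ hi, col0, if_neg hi, map_zero, neg_zero]
  rw [Matrix.charpoly, Matrix.twoBlockTriangular_det _ (fun i => i = 0) hblock]
  congr 1
  · haveI : Subsingleton {i : Fin (p+1) // i = 0} :=
      ⟨by rintro ⟨a, ha⟩ ⟨b, hb⟩; exact Subtype.ext (ha.trans hb.symm)⟩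
    rw [det_subsingleton_block (charmatrix A) (fun i => i = 0) ⟨0, rfl⟩,
      charmatrix_apply_eq, col0, if_pos rfl]
  · rw [← Matrix.det_submatrix_equiv_self (eqS p), Matrix.charpoly]
    congr 1
    ext i i'
    simp only [Matrix.submatrix_apply, Matrix.toSquareBlockProp_def, Matrix.of_apply, eqS_apply,
      charmatrix_apply, Matrix.diagonal_apply, Fin.succ_inj]

set_option maxHeartbeats 2000000 in
private theorem kronSum_det_aux {K : Type*} [Field K] [IsAlgClosed K] {q : ℕ}
    (N : Matrix (Fin q) (Fin q) K) :
    ∀ (p : ℕ) (M : Matrix (Fin p) (Fin p) K),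
      (M ⊗ₖ (1 : Matrix (Fin q) (Fin q) K) + (1 : Matrix (Fin p) (Fin p) K) ⊗ₖ N).det
        = (M.charpoly.roots.map fun r => (N + r • 1).det).prod := by
  intro p
  induction p with
  | zero =>
      intro M
      have h1 : M.charpoly = 1 := by
        rw [Matrix.charpoly]; exact det_isEmpty
      rw [h1, roots_one]
      simp [det_isEmpty]
  | succ p IH =>
      intro M
      obtain ⟨c, hc⟩ := Module.End.exists_eigenvalue (Matrix.toLin' M)
      obtain ⟨v, hv⟩ := hc.exists_hasEigenvector
      have hv0 : v ≠ 0 := hv.right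
      have hMv : M.mulVec v = c • v := by
        have := hv.apply_eq_smul
        rwa [Matrix.toLin'_apply] at this
      obtain ⟨j, hj⟩ : ∃ j, v j ≠ 0 := by
        by_contra h; push_neg at h; exact hv0 (funext h)
      set P : Matrix (Fin (p+1)) (Fin (p+1)) K :=
        Matrix.of fun i k =>
          Fin.cases (v i) (fun k' => if i = j.succAbove k' then 1 else 0) k with hP
      have hPapply0 : ∀ i, P i 0 = v i := fun i => rfl
      have hPapplyS : ∀ i k', P i (Fin.succ k') = if i = j.succAbove k' then 1 else 0 :=
        fun i k' => rfl
      have hPdet : P.det ≠ 0 := by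
        intro h0
        obtain ⟨x, hx0, hx⟩ := (Matrix.exists_mulVec_eq_zero_iff).2 h0
        have hrow : ∀ i, ∑ k, P i k * x k = 0 := by
          intro i
          have := congrFun hx i
          simpa [Matrix.mulVec, dotProduct] using this
        have hx00 : x 0 = 0 := by
          have := hrow j
          rw [Fin.sum_univ_succ] at this
          simp only [hPapply0, hPapplyS] at this
          have hz : ∀ k' : Fin p, (if j = j.succAbove k' then (1:K) else 0) * x k'.succ = 0 := by
            intro k'
            rw [if_neg (Fin.succAbove_ne j k').symm, zero_mul]
          rw [Finset.sum_congr rfl (fun k' _ => hz k'), Finset.sum_const_zero, add_zero] at this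
          exact (mul_eq_zero.1 this).resolve_left hj
        have hxs : ∀ i0 : Fin p, x i0.succ = 0 := by
          intro i0
          have := hrow (j.succAbove i0)
          rw [Fin.sum_univ_succ] at this
          simp only [hPapply0, hPapplyS, hx00, mul_zero, zero_add,
            Fin.succAbove_right_inj] at this
          simpa using this
        apply hx0
        funext i
        refine Fin.cases hx00 hxs i
      haveI : Invertible P := P.invertibleOfIsUnitDet (isUnit_iff_ne_zero.2 hPdet)
      set A : Matrix (Fin (p+1)) (Fin (p+1)) K := ⅟P * M * P with hA
      have col0 : ∀ i, A i 0 = if i = 0 then c else 0 := by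
        intro i
        have hMP : ∀ k, (M * P) k 0 = c * P k 0 := by
          intro k
          have h1 : (M * P) k 0 = (M.mulVec v) k := by
            simp [Matrix.mul_apply, Matrix.mulVec, dotProduct, hPapply0]
          rw [h1, hMv]
          simp [hPapply0]
        have h2 : A i 0 = ∑ k, ⅟P i k * (M * P) k 0 := by
          rw [hA, Matrix.mul_assoc, Matrix.mul_apply]
        rw [h2]
        have h3 : ∑ k, ⅟P i k * (M * P) k 0 = c * ∑ k, ⅟P i k * P k 0 := by
          rw [Finset.mul_sum]
          exact Finset.sum_congr rfl fun k _ => by rw [hMP k]; ring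
        rw [h3, ← Matrix.mul_apply, invOf_mul_self]
        by_cases hi : i = 0 <;> simp [Matrix.one_apply, hi]
      -- conjugation step
      have h1 : ((⅟P) ⊗ₖ (1 : Matrix (Fin q) (Fin q) K)) * (M ⊗ₖ 1) * (P ⊗ₖ 1) = A ⊗ₖ 1 := by
        rw [← Matrix.mul_kronecker_mul, ← Matrix.mul_kronecker_mul, hA]
        simp only [Matrix.mul_one, Matrix.one_mul]
      have h2 : ((⅟P) ⊗ₖ (1 : Matrix (Fin q) (Fin q) K)) *
          ((1 : Matrix (Fin (p+1)) (Fin (p+1)) K) ⊗ₖ N) * (P ⊗ₖ 1) = 1 ⊗ₖ N := by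
        rw [← Matrix.mul_kronecker_mul, ← Matrix.mul_kronecker_mul]
        simp only [Matrix.mul_one, Matrix.one_mul, invOf_mul_self]
      have key : ((⅟P) ⊗ₖ (1 : Matrix (Fin q) (Fin q) K)) * (M ⊗ₖ 1 + 1 ⊗ₖ N) * (P ⊗ₖ 1)
          = A ⊗ₖ 1 + 1 ⊗ₖ N := by
        rw [Matrix.mul_add, Matrix.add_mul, h1, h2]
      have hdet1 : ((⅟P) ⊗ₖ (1 : Matrix (Fin q) (Fin q) K)) * (P ⊗ₖ 1) = 1 := by
        rw [← Matrix.mul_kronecker_mul, invOf_mul_self, Matrix.one_mul, Matrix.one_kronecker_one]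
      have hconj : (M ⊗ₖ (1 : Matrix (Fin q) (Fin q) K) + 1 ⊗ₖ N).det
          = (A ⊗ₖ (1 : Matrix (Fin q) (Fin q) K) + 1 ⊗ₖ N).det := by
        rw [← key, det_mul, det_mul, mul_right_comm, ← det_mul, hdet1, det_one, one_mul]
      -- block determinant step
      set A₁ := A.submatrix Fin.succ Fin.succ with hA₁
      have hblockdet : (A ⊗ₖ (1 : Matrix (Fin q) (Fin q) K) + 1 ⊗ₖ N).det
          = (N + c • 1).det * (A₁ ⊗ₖ (1 : Matrix (Fin q) (Fin q) K) + 1 ⊗ₖ N).det := by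
        set S := A ⊗ₖ (1 : Matrix (Fin q) (Fin q) K) + 1 ⊗ₖ N with hS
        have hblock : ∀ x : Fin (p+1) × Fin q, ¬ x.1 = 0 → ∀ y : Fin (p+1) × Fin q, y.1 = 0 →
            S x y = 0 := by
          rintro ⟨x1, x2⟩ hx ⟨y1, y2⟩ hy
          simp only at hx hy
          subst hy
          simp [hS, Matrix.kroneckerMap_apply, Matrix.one_apply, col0, hx]
        rw [Matrix.twoBlockTriangular_det S (fun x => x.1 = 0) hblock]
        congr 1
        · rw [← Matrix.det_submatrix_equiv_self (eqF0 p q)]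
          congr 1
          ext j2 j2'
          simp only [Matrix.submatrix_apply, Matrix.toSquareBlockProp_def, Matrix.of_apply,
            eqF0_apply, hS, Matrix.add_apply, Matrix.kroneckerMap_apply, col0,
            Matrix.one_apply, Matrix.smul_apply, smul_eq_mul, if_pos rfl, if_true]
          split_ifs <;> simp_all [add_comm]
        · rw [← Matrix.det_submatrix_equiv_self (eqFS p q)]
          congr 1
          ext x y
          simp only [Matrix.submatrix_apply, Matrix.toSquareBlockProp_def, Matrix.of_apply,
            eqFS_apply, hS, Matrix.add_apply, Matrix.kroneckerMap_apply,
            Matrix.one_apply, Fin.succ_inj, hA₁]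
          rfl
      -- charpoly factorization
      have hcharM : M.charpoly = (X - C c) * A₁.charpoly := by
        rw [← my_charpoly_conj P M, ← hA, charpoly_succ A c col0, hA₁]
      -- put everything together
      rw [hconj, hblockdet, IH A₁, hcharM]
      have hne : (X - C c) * A₁.charpoly ≠ 0 :=
        mul_ne_zero (X_sub_C_ne_zero c) A₁.charpoly_monic.ne_zero
      rw [roots_mul hne, roots_X_sub_C, Multiset.map_add, Multiset.prod_add,
        Multiset.map_singleton, Multiset.prod_singleton]


/-- Kronecker sum of eigenvalues: if `M` has eigenvalues `λ_i` (with multiplicity,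
over an algebraically closed field), i.e. `det(M + tI) = ∏ᵢ (t + λᵢ)`, and `N` has
eigenvalues `μ_j`, then `M ⊗ I + I ⊗ N` has eigenvalues `λ_i + μ_j`, i.e.
`det(M ⊗ I + I ⊗ N + tI) = ∏_{i,j} (t + λᵢ + μⱼ)`. -/
theorem kronecker_sum_eigenvalues {K : Type*} [Field K] [IsAlgClosed K]
    (p q : ℕ) (M : Matrix (Fin p) (Fin p) K) (N : Matrix (Fin q) (Fin q) K)
    (lam : Fin p → K) (mu : Fin q → K)
    (hM : ∀ t : K, (M + t • 1).det = ∏ i : Fin p, (t + lam i))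
    (hN : ∀ t : K, (N + t • 1).det = ∏ j : Fin q, (t + mu j)) :
    ∀ t : K,
      (M ⊗ₖ (1 : Matrix (Fin q) (Fin q) K) +
        (1 : Matrix (Fin p) (Fin p) K) ⊗ₖ N + t • 1).det =
      ∏ i : Fin p, ∏ j : Fin q, (t + lam i + mu j) := by
  intro t
  set M' : Matrix (Fin p) (Fin p) K := M + t • 1 with hM'
  have hLHS : M ⊗ₖ (1 : Matrix (Fin q) (Fin q) K) +
      (1 : Matrix (Fin p) (Fin p) K) ⊗ₖ N + t • 1
      = M' ⊗ₖ (1 : Matrix (Fin q) (Fin q) K) + (1 : Matrix (Fin p) (Fin p) K) ⊗ₖ N := by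
    rw [hM', Matrix.add_kronecker, Matrix.smul_kronecker, Matrix.one_kronecker_one]
    abel
  -- charpoly of M' splits as ∏ (X - C (t + lam i))
  have hsplit : M'.charpoly = ∏ i : Fin p, (X - C (t + lam i)) := by
    apply Polynomial.funext
    intro x
    rw [eval_prod]
    simp only [eval_sub, eval_X, eval_C]
    have h1 : M'.charpoly.eval x = ((charmatrix M').map (eval x)).det := by
      rw [Matrix.charpoly, ← coe_evalRingHom, RingHom.map_det, RingHom.mapMatrix_apply]
    have h2 : (charmatrix M').map (eval x) = x • (1 : Matrix (Fin p) (Fin p) K) - M' := by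
      ext i jj
      by_cases h : i = jj <;>
        simp [charmatrix_apply, Matrix.diagonal_apply, Matrix.sub_apply, Matrix.smul_apply,
          Matrix.one_apply, h]
    have h3 : x • (1 : Matrix (Fin p) (Fin p) K) - M' = -(M' + (-x) • 1) := by
      rw [neg_add, neg_smul, neg_neg, sub_eq_neg_add]
    have h4 : M' + (-x) • (1 : Matrix (Fin p) (Fin p) K) = M + (t + -x) • 1 := by
      rw [hM', add_smul, add_assoc]
    rw [h1, h2, h3, Matrix.det_neg, h4, hM (t + -x), Fintype.card_fin]
    rw [show ∏ x1 : Fin p, (x - (t + lam x1)) = ∏ i : Fin p, (-1 : K) * (t + -x + lam i) from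
      Finset.prod_congr rfl fun i _ => by ring]
    rw [Finset.prod_mul_distrib, Finset.prod_const, Finset.card_fin]
  have hroots : M'.charpoly.roots = Finset.univ.val.map fun i : Fin p => t + lam i := by
    rw [hsplit, Finset.prod_eq_multiset_prod]
    have hmm : Multiset.map (fun i : Fin p => X - C (t + lam i)) Finset.univ.val
        = Multiset.map (fun a : K => X - C a)
            (Multiset.map (fun i : Fin p => t + lam i) Finset.univ.val) := by
      rw [Multiset.map_map]
      rfl
    rw [hmm, roots_multiset_prod_X_sub_C]
  rw [hLHS, kronSum_det_aux N p M', hroots, Multiset.map_map]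
  rw [← Finset.prod_eq_multiset_prod]
  refine Finset.prod_congr rfl fun i _ => ?_
  have := hN (t + lam i)
  rw [Function.comp_apply, this]
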